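/- Let G be a Noetherian group (every subgroup is finitely generated) and H a subgroup of G. If g ∈ G is such that the index of gHg⁻¹ ∩ H in H is finite, then g normalizes H*, where H* is the smallest subgroup of G containing H that is closed under taking roots (i.e., if x^i ∈ H* for some positive integer i then x ∈ H*). -/

import Mathlib

/-- The root closure `H*` of a subgroup `H` of `G`: the smallest subgroup of `G`
containing `H` such that whenever `x ^ i` lies in it for some positive integer `i`,
so does `x`. -/
def rootClosure {G : Type*} [Group G] (H : Subgroup G) : Subgroup G :=
  sInf {N : Subgroup G | H ≤ N ∧ ∀ (x : G) (i : ℕ), 0 < i → x ^ i ∈ N → x ∈ N}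

lemma le_rootClosure {G : Type*} [Group G] (H : Subgroup G) : H ≤ rootClosure H :=
  le_sInf fun _ hN => hN.1

lemma rootClosure_rootClosed {G : Type*} [Group G] (H : Subgroup G) (x : G) (i : ℕ)
    (hi : 0 < i) (hx : x ^ i ∈ rootClosure H) : x ∈ rootClosure H := by
  refine Subgroup.mem_sInf.2 fun N hN => hN.2 x i hi ?_
  exact Subgroup.mem_sInf.1 hx N hN

lemma rootClosure_le {G : Type*} [Group G] {H N : Subgroup G} (h1 : H ≤ N)
    (h2 : ∀ (x : G) (i : ℕ), 0 < i → x ^ i ∈ N → x ∈ N) : rootClosure H ≤ N :=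
  sInf_le ⟨h1, h2⟩

/-- The image of a root closure under an automorphism contains `H`'s root closure
conditions; key step: `N.map (conj g)` is root-closed if `N` is. -/
lemma map_rootClosed {G : Type*} [Group G] (N : Subgroup G)
    (hN : ∀ (x : G) (i : ℕ), 0 < i → x ^ i ∈ N → x ∈ N) (e : G ≃* G)
    (x : G) (i : ℕ) (hi : 0 < i) (hx : x ^ i ∈ N.map e.toMonoidHom) :
    x ∈ N.map e.toMonoidHom := by
  obtain ⟨y, hy, hyx⟩ := hx
  have hxy : (e.symm x) ^ i = y := by
    rw [← map_pow, ← hyx]; exact e.symm_apply_apply y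
  exact ⟨e.symm x, hN _ i hi (hxy ▸ hy), e.apply_symm_apply x⟩

theorem stmt0 {G : Type*} [Group G] (hNoeth : ∀ N : Subgroup G, N.FG)
    (H : Subgroup G) (g : G)
    (hfin : (H.map (MulAut.conj g).toMonoidHom).relIndex H ≠ 0) :
    g ∈ Subgroup.normalizer (rootClosure H : Set G) := by
  set N := rootClosure H with hNdef
  -- Step 1: H ≤ N.map (conj g)
  have hstep : H ≤ N.map (MulAut.conj g).toMonoidHom := by
    intro h hh
    obtain ⟨n, hn, -, hpow⟩ := Subgroup.exists_pow_mem_of_relIndex_ne_zero hfin hh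
    have hmem : h ^ n ∈ H.map (MulAut.conj g).toMonoidHom := hpow.1
    have hmem' : h ^ n ∈ N.map (MulAut.conj g).toMonoidHom :=
      Subgroup.map_mono (le_rootClosure H) hmem
    exact map_rootClosed N (rootClosure_rootClosed H) (MulAut.conj g) h n hn hmem'
  -- Step 2: N ≤ N.map (conj g)
  have hmono : N ≤ N.map (MulAut.conj g).toMonoidHom :=
    rootClosure_le hstep (map_rootClosed N (rootClosure_rootClosed H) (MulAut.conj g))
  -- Step 3: the ascending chain f n = N.map (conj (g^n))
  set f : ℕ → Subgroup G := fun n => N.map (MulAut.conj (g ^ n)).toMonoidHom with hf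
  have hcomp : ∀ n : ℕ, f (n + 1) =
      (N.map (MulAut.conj g).toMonoidHom).map (MulAut.conj (g ^ n)).toMonoidHom := by
    intro n
    have hhom : (MulAut.conj (g ^ (n + 1))).toMonoidHom =
        ((MulAut.conj (g ^ n)).toMonoidHom).comp (MulAut.conj g).toMonoidHom := by
      ext y
      simp only [MonoidHom.comp_apply, MulEquiv.coe_toMonoidHom, MulAut.conj_apply, pow_succ]
      group
    rw [hf]
    simp only
    rw [hhom, ← Subgroup.map_map]
  have hfmono : Monotone f := by
    apply monotone_nat_of_le_succ
    intro n
    rw [hcomp n]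
    exact Subgroup.map_mono hmono
  -- Step 4: stabilization via FG of the sup
  obtain ⟨S, hS⟩ := hNoeth (⨆ n, f n)
  have hdir : Directed (· ≤ ·) f := hfmono.directed_le
  have hex : ∀ x ∈ S, ∃ n, x ∈ f n := by
    intro x hx
    have : x ∈ ⨆ n, f n := hS ▸ Subgroup.subset_closure hx
    exact (Subgroup.mem_iSup_of_directed hdir).1 this
  have hbound : ∃ m, ∀ x ∈ S, x ∈ f m := by
    classical
    choose idx hidx using hex
    refine ⟨S.attach.sup fun x => idx x x.2, fun x hx => ?_⟩
    exact hfmono (Finset.le_sup (Finset.mem_attach S ⟨x, hx⟩)) (hidx x hx)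
  obtain ⟨m, hmem⟩ := hbound
  have hm : ⨆ n, f n ≤ f m := by
    rw [← hS]
    exact (Subgroup.closure_le _).2 fun x hx => hmem x hx
  have hstab : f (m + 1) ≤ f m := le_trans (le_iSup f (m + 1)) hm
  -- Step 5: unconjugate
  have hinj : Function.Injective (MulAut.conj (g ^ m)).toMonoidHom :=
    (MulAut.conj (g ^ m)).injective
  have hle : N.map (MulAut.conj g).toMonoidHom ≤ N := by
    have := hstab
    rw [hcomp m] at this
    exact (Subgroup.map_le_map_iff_of_injective hinj).1 this
  have heq : N.map (MulAut.conj g).toMonoidHom = N := le_antisymm hle hmono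
  rw [Subgroup.mem_normalizer_iff]
  intro h
  constructor
  · intro hh
    have : g * h * g⁻¹ ∈ N.map (MulAut.conj g).toMonoidHom := ⟨h, hh, rfl⟩
    rwa [heq] at this
  · intro hh
    rw [← heq] at hh
    obtain ⟨x, hx, hxe⟩ := hh
    have : x = h := by
      have : g * x * g⁻¹ = g * h * g⁻¹ := hxe
      exact mul_left_cancel (mul_right_cancel this)
    rwa [← this]
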